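/- Let g(u) = C₁u² + C₂u + C₃ be a quadratic polynomial with real coefficients and set f(u) = g(u)². Let u(t,x) be any smooth real-valued function of two real variables (not assumed to solve any equation) with u_x(t,x) ≠ 0 for all (t,x). Define T̃₂ᵦ = g(u)/u_x, X̃₂ᵦ = u_xx²·g(u)/u_x³ − 2·u_xx·g'(u)/u_x + u_t·g(u)/u_x² − (2/3)·g(u)³/u_x³ + 2·u_x·g''(u), and Q̃₂ᵦ = −2·u_xx·g(u)/u_x³ + 2·g'(u)/u_x, all evaluated at (t,x). Then the characteristic identity ∂_t T̃₂ᵦ + ∂_x X̃₂ᵦ = Q̃₂ᵦ · (u_t − u_xxx + (3/2)·u_xx²/u_x − g(u)²/u_x) holds at every point (t,x). (Q̃₂ᵦ is the conservation law multiplier admitted by the gKN equation when f is the square of a quadratic polynomial.) -/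

import Mathlib

open Real

/-- Partial derivative with respect to the second (spatial) variable. -/
noncomputable def pdx (u : ℝ → ℝ → ℝ) : ℝ → ℝ → ℝ := fun t x => deriv (fun y => u t y) x

/-- Partial derivative with respect to the first (time) variable. -/
noncomputable def pdt (u : ℝ → ℝ → ℝ) : ℝ → ℝ → ℝ := fun t x => deriv (fun s => u s x) t

/-- `u` solves the generalized Krichever-Novikov equation with nonlinearity `f`:
`u_t = u_xxx - (3/2) u_xx^2/u_x + f(u)/u_x`. -/
def isGKN (f : ℝ → ℝ) (u : ℝ → ℝ → ℝ) : Prop :=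
  ∀ t x, pdt u t x =
    pdx (pdx (pdx u)) t x - (3/2) * (pdx (pdx u) t x)^2 / pdx u t x + f (u t x) / pdx u t x


lemma one_le_cinf : (1 : WithTop ℕ∞) ≤ ((⊤:ℕ∞) : WithTop ℕ∞) := by exact_mod_cast le_top
lemma two_le_cinf : (2 : WithTop ℕ∞) ≤ ((⊤:ℕ∞) : WithTop ℕ∞) := by norm_cast
lemma cinf_add_one : ((⊤:ℕ∞) : WithTop ℕ∞) + 1 ≤ ((⊤:ℕ∞) : WithTop ℕ∞) := by exact_mod_cast le_refl _

lemma hasDerivAt_secx {t x : ℝ} {V : ℝ × ℝ → ℝ} (hV : DifferentiableAt ℝ V (t, x)) :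
    HasDerivAt (fun y => V (t, y)) (fderiv ℝ V (t, x) (0, 1)) x := by
  have h1 : HasDerivAt (fun y : ℝ => ((t, y) : ℝ × ℝ)) (0, 1) x :=
    (hasDerivAt_const x t).prodMk (hasDerivAt_id x)
  exact hV.hasFDerivAt.comp_hasDerivAt x h1

lemma hasDerivAt_sect {t x : ℝ} {V : ℝ × ℝ → ℝ} (hV : DifferentiableAt ℝ V (t, x)) :
    HasDerivAt (fun s => V (s, x)) (fderiv ℝ V (t, x) (1, 0)) t := by
  have h1 : HasDerivAt (fun s : ℝ => ((s, x) : ℝ × ℝ)) (1, 0) t :=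
    (hasDerivAt_id t).prodMk (hasDerivAt_const t x)
  exact hV.hasFDerivAt.comp_hasDerivAt t h1

lemma smooth_pd {V : ℝ × ℝ → ℝ} (hV : ContDiff ℝ (⊤ : ℕ∞) V) (v : ℝ × ℝ) :
    ContDiff ℝ (⊤ : ℕ∞) (fun p => fderiv ℝ V p v) :=
  (ContinuousLinearMap.apply ℝ ℝ v).contDiff.comp (hV.fderiv_right cinf_add_one)

lemma uncurry_pdx {u : ℝ → ℝ → ℝ} (hu : ContDiff ℝ (⊤ : ℕ∞) (Function.uncurry u)) :
    Function.uncurry (pdx u) = fun p => fderiv ℝ (Function.uncurry u) p (0, 1) := by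
  funext p
  exact (hasDerivAt_secx (hu.differentiable (by simp) _)).deriv

lemma uncurry_pdt {u : ℝ → ℝ → ℝ} (hu : ContDiff ℝ (⊤ : ℕ∞) (Function.uncurry u)) :
    Function.uncurry (pdt u) = fun p => fderiv ℝ (Function.uncurry u) p (1, 0) := by
  funext p
  exact (hasDerivAt_sect (hu.differentiable (by simp) _)).deriv

lemma smooth_pdx {u : ℝ → ℝ → ℝ} (hu : ContDiff ℝ (⊤ : ℕ∞) (Function.uncurry u)) :
    ContDiff ℝ (⊤ : ℕ∞) (Function.uncurry (pdx u)) := by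
  rw [uncurry_pdx hu]; exact smooth_pd hu _

lemma smooth_pdt {u : ℝ → ℝ → ℝ} (hu : ContDiff ℝ (⊤ : ℕ∞) (Function.uncurry u)) :
    ContDiff ℝ (⊤ : ℕ∞) (Function.uncurry (pdt u)) := by
  rw [uncurry_pdt hu]; exact smooth_pd hu _

lemma pdx_hasDerivAt {u : ℝ → ℝ → ℝ} (hu : ContDiff ℝ (⊤ : ℕ∞) (Function.uncurry u)) (t x : ℝ) :
    HasDerivAt (fun y => u t y) (pdx u t x) x := by
  have h := hasDerivAt_secx (V := Function.uncurry u) (t := t) (x := x)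
    (hu.differentiable (by simp) _)
  have e : pdx u t x = fderiv ℝ (Function.uncurry u) (t, x) (0, 1) :=
    congrFun (uncurry_pdx hu) (t, x)
  rw [e]; exact h

lemma pdt_hasDerivAt {u : ℝ → ℝ → ℝ} (hu : ContDiff ℝ (⊤ : ℕ∞) (Function.uncurry u)) (t x : ℝ) :
    HasDerivAt (fun s => u s x) (pdt u t x) t := by
  have h := hasDerivAt_sect (V := Function.uncurry u) (t := t) (x := x)
    (hu.differentiable (by simp) _)
  have e : pdt u t x = fderiv ℝ (Function.uncurry u) (t, x) (1, 0) :=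
    congrFun (uncurry_pdt hu) (t, x)
  rw [e]; exact h

lemma mixed_symm {u : ℝ → ℝ → ℝ} (hu : ContDiff ℝ (⊤ : ℕ∞) (Function.uncurry u)) (t x : ℝ) :
    pdx (pdt u) t x = pdt (pdx u) t x := by
  have hsymm : IsSymmSndFDerivAt ℝ (Function.uncurry u) (t, x) :=
    hu.contDiffAt.isSymmSndFDerivAt (by simpa using two_le_cinf)
  have hdd : DifferentiableAt ℝ (fderiv ℝ (Function.uncurry u)) (t, x) :=
    ((hu.fderiv_right cinf_add_one).differentiable (by simp)) _
  have e1 : ∀ v w : ℝ × ℝ,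
      fderiv ℝ (fun p => fderiv ℝ (Function.uncurry u) p v) (t, x) w
        = fderiv ℝ (fderiv ℝ (Function.uncurry u)) (t, x) w v := by
    intro v w
    rw [fderiv_clm_apply hdd (differentiableAt_const v)]
    simp
  have hx : pdx (pdt u) t x
      = fderiv ℝ (fun p => fderiv ℝ (Function.uncurry u) p (1, 0)) (t, x) (0, 1) := by
    have hG : ContDiff ℝ (⊤ : ℕ∞) (fun p => fderiv ℝ (Function.uncurry u) p (1, 0)) :=
      smooth_pd hu _
    have h := (hasDerivAt_secx (V := fun p => fderiv ℝ (Function.uncurry u) p (1, 0))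
      (t := t) (x := x) (hG.differentiable (by simp) _)).deriv
    rw [← h]
    simp only [pdx]
    congr 1
    funext y
    exact congrFun (uncurry_pdt hu) (t, y)
  have ht : pdt (pdx u) t x
      = fderiv ℝ (fun p => fderiv ℝ (Function.uncurry u) p (0, 1)) (t, x) (1, 0) := by
    have hG : ContDiff ℝ (⊤ : ℕ∞) (fun p => fderiv ℝ (Function.uncurry u) p (0, 1)) :=
      smooth_pd hu _
    have h := (hasDerivAt_sect (V := fun p => fderiv ℝ (Function.uncurry u) p (0, 1))
      (t := t) (x := x) (hG.differentiable (by simp) _)).deriv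
    rw [← h]
    simp only [pdt]
    congr 1
    funext s
    exact congrFun (uncurry_pdx hu) (s, x)
  rw [hx, ht, e1, e1]
  exact hsymm.eq _ _

/-- The characteristic identity for the multiplier `Q̃₂ᵦ = -2 u_xx g(u)/u_x³ + 2 g'(u)/u_x`
of the gKN equation with `f = g²`, holding for arbitrary smooth `u`. -/
theorem gKN_multiplier_Q2b (C₁ C₂ C₃ : ℝ)
    (g : ℝ → ℝ) (hg : ∀ v, g v = C₁ * v^2 + C₂ * v + C₃)
    (u : ℝ → ℝ → ℝ) (hu : ContDiff ℝ (⊤ : ℕ∞) (Function.uncurry u))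
    (hux : ∀ t x, pdx u t x ≠ 0) :
    ∀ t x,
      pdt (fun t x => (g (u t x)) / (pdx u t x)) t x
        + pdx (fun t x =>
            (pdx (pdx u) t x)^2 * (g (u t x)) / (pdx u t x)^3 - 2 * (pdx (pdx u) t x) * (deriv g (u t x)) / (pdx u t x)
              + (pdt u t x) * (g (u t x)) / (pdx u t x)^2 - (2/3) * (g (u t x))^3 / (pdx u t x)^3
              + 2 * (pdx u t x) * (deriv (deriv g) (u t x))) t x
      = (-(2 * (pdx (pdx u) t x) * (g (u t x)) / (pdx u t x)^3) + 2 * (deriv g (u t x)) / (pdx u t x))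
          * ((pdt u t x) - (pdx (pdx (pdx u)) t x) + (3/2) * (pdx (pdx u) t x)^2 / (pdx u t x) - (g (u t x))^2 / (pdx u t x)) := by
  have hgfun : g = fun v => C₁ * v^2 + C₂ * v + C₃ := funext hg
  subst hgfun
  have hgd : deriv (fun v : ℝ => C₁ * v^2 + C₂ * v + C₃) = fun v => 2 * C₁ * v + C₂ := by
    funext v
    have h : HasDerivAt (fun v : ℝ => C₁ * v^2 + C₂ * v + C₃) (2 * C₁ * v + C₂) v := by
      have := (((hasDerivAt_pow 2 v).const_mul C₁).fun_add ((hasDerivAt_id v).const_mul C₂)).add_const C₃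
      refine this.congr_deriv ?_
      push_cast; ring
    exact h.deriv
  have hgd2 : deriv (fun v : ℝ => 2 * C₁ * v + C₂) = fun _ : ℝ => 2 * C₁ := by
    funext v
    have h : HasDerivAt (fun v : ℝ => 2 * C₁ * v + C₂) (2 * C₁) v := by
      simpa using ((hasDerivAt_id v).const_mul (2 * C₁)).add_const C₂
    exact h.deriv
  intro t x
  have hB : pdx u t x ≠ 0 := hux t x
  -- time derivatives
  have hA : HasDerivAt (fun s => u s x) (pdt u t x) t := pdt_hasDerivAt hu t x
  have hE : HasDerivAt (fun s => pdx u s x) (pdt (pdx u) t x) t :=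
    pdt_hasDerivAt (smooth_pdx hu) t x
  have hP : HasDerivAt (fun s => C₁ * u s x ^ 2 + C₂ * u s x + C₃)
      ((2 * C₁ * u t x + C₂) * pdt u t x) t := by
    have := (((hA.fun_pow 2).const_mul C₁).fun_add (hA.const_mul C₂)).add_const C₃
    refine this.congr_deriv ?_
    push_cast; ring
  have e1 : pdt (fun t x => (C₁ * u t x ^ 2 + C₂ * u t x + C₃) / pdx u t x) t x = _ :=
    (hP.fun_div hE hB).deriv
  -- space derivatives
  have hBy : HasDerivAt (fun y => u t y) (pdx u t x) x := pdx_hasDerivAt hu t x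
  have hCy : HasDerivAt (fun y => pdx u t y) (pdx (pdx u) t x) x :=
    pdx_hasDerivAt (smooth_pdx hu) t x
  have hDy : HasDerivAt (fun y => pdx (pdx u) t y) (pdx (pdx (pdx u)) t x) x :=
    pdx_hasDerivAt (smooth_pdx (smooth_pdx hu)) t x
  have hAy : HasDerivAt (fun y => pdt u t y) (pdx (pdt u) t x) x :=
    pdx_hasDerivAt (smooth_pdt hu) t x
  rw [mixed_symm hu t x] at hAy
  have hPy : HasDerivAt (fun y => C₁ * u t y ^ 2 + C₂ * u t y + C₃)
      ((2 * C₁ * u t x + C₂) * pdx u t x) x := by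
    have := (((hBy.fun_pow 2).const_mul C₁).fun_add (hBy.const_mul C₂)).add_const C₃
    refine this.congr_deriv ?_
    push_cast; ring
  have hQy : HasDerivAt (fun y => 2 * C₁ * u t y + C₂) (2 * C₁ * pdx u t x) x := by
    have := (hBy.const_mul (2 * C₁)).add_const C₂
    convert this using 1
  have term1 := ((hDy.fun_pow 2).fun_mul hPy).fun_div (hCy.fun_pow 3) (pow_ne_zero 3 hB)
  have term2 := ((hDy.const_mul 2).fun_mul hQy).fun_div hCy hB
  have term3 := (hAy.fun_mul hPy).fun_div (hCy.fun_pow 2) (pow_ne_zero 2 hB)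
  have term4 := ((hPy.fun_pow 3).const_mul (2/3)).fun_div (hCy.fun_pow 3) (pow_ne_zero 3 hB)
  have term5 := (hCy.const_mul 2).mul_const (2 * C₁)
  have e2 : pdx (fun t x =>
      pdx (pdx u) t x ^ 2 * (C₁ * u t x ^ 2 + C₂ * u t x + C₃) / pdx u t x ^ 3 -
            2 * pdx (pdx u) t x * (2 * C₁ * u t x + C₂) / pdx u t x +
          pdt u t x * (C₁ * u t x ^ 2 + C₂ * u t x + C₃) / pdx u t x ^ 2 -
        2 / 3 * (C₁ * u t x ^ 2 + C₂ * u t x + C₃) ^ 3 / pdx u t x ^ 3 +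
      2 * pdx u t x * (2 * C₁)) t x = _ :=
    ((((term1.fun_sub term2).fun_add term3).fun_sub term4).fun_add term5).deriv
  simp only [hgd, hgd2]
  rw [e1, e2]
  field_simp
  ring
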